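/- Fix a ∈ (0, π/2] and define J_a(x,y) = min{ J(x,y), J(Ψ_a(x,y)) } for (x,y) in the closed cone Ω̄_a. If (x,y) = (r sin ϑ, r cos ϑ) with r ≥ 0 and ϑ ∈ [π/2 − a, π/2] (the half of the cone adjacent to the positive x-axis), then J_a(x,y) = J(x,y); if instead ϑ ∈ [π/2 − 2a, π/2 − a], then J_a(x,y) = J(Ψ_a(x,y)). -/

import Mathlib

open Real Filter Set

noncomputable section

/-- The field Lagrangian `L_f(v₁,v₂) = (v₁² + v₂²)/4 − 1`. -/
def Lf (v₁ v₂ : ℝ) : ℝ := (v₁ ^ 2 + v₂ ^ 2) / 4 - 1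

/-- The effective road Hamiltonian `H_r(q) = q² + (p_q)² + 1` built from the
critical-slope function `pq`. -/
def Hr (pq : ℝ → ℝ) (q : ℝ) : ℝ := q ^ 2 + pq q ^ 2 + 1

/-- The road Lagrangian: the Legendre transform of `Hr`. -/
def Lr (pq : ℝ → ℝ) (v : ℝ) : ℝ := ⨆ q : ℝ, (v * q - Hr pq q)

/-- `pq` assigns to each `q` the critical slope `p_q`: it equals `0` when
`(D−1)q² ≤ 1`, and otherwise it is the unique positive root of
`(D−1)q² = p² + 1 + μp/(κν + p)`. -/
def IsCriticalSlope (D μ ν κ : ℝ) (pq : ℝ → ℝ) : Prop :=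
  ∀ q : ℝ,
    ((D - 1) * q ^ 2 ≤ 1 → pq q = 0) ∧
    (1 < (D - 1) * q ^ 2 →
      0 < pq q ∧ (D - 1) * q ^ 2 = pq q ^ 2 + 1 + μ * pq q / (κ * ν + pq q))

/-- The set of candidate costs in the control problem at a point `(x,y)` with
`x ≥ 0`, `y ≥ 0`: the pure-field cost, the broken road-then-field costs, and
(when `y = 0`) the pure-road cost. -/
def Jset (pq : ℝ → ℝ) (x y : ℝ) : Set ℝ :=
  {Lf x y} ∪
    {c | ∃ τ z : ℝ, 0 < τ ∧ τ < 1 ∧ 0 ≤ z ∧ z ≤ x ∧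
      c = (1 - τ) * Lf ((x - z) / (1 - τ)) (y / (1 - τ)) + τ * Lr pq (z / τ)} ∪
    (if y = 0 then {Lr pq x} else ∅)

/-- The value function `J(x,y)`, extended evenly in `x`. -/
def J (pq : ℝ → ℝ) (x y : ℝ) : ℝ := sInf (Jset pq |x| y)
/-- The field Hamiltonian `H_f(q,p) = q² + p² + 1`. -/
def Hf (q p : ℝ) : ℝ := q ^ 2 + p ^ 2 + 1

/-- The road boundary Hamiltonian `F₀(q,p) = Dq² − μp/(κν + p)`. -/
def F0 (D μ ν κ q p : ℝ) : ℝ := D * q ^ 2 - μ * p / (κ * ν + p)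

/-- The spreading speed along the road, `inf_{q>0} H_r(q)/q`. -/
def roadSpeed (pq : ℝ → ℝ) : ℝ := sInf ((fun q => Hr pq q / q) '' Set.Ioi (0 : ℝ))

/-- The directional spreading speed in direction `ϑ` (measured from the
positive `y`-axis). -/
def cstar (pq : ℝ → ℝ) (ϑ : ℝ) : ℝ :=
  sSup {r : ℝ | 0 ≤ r ∧ J pq (r * Real.sin ϑ) (r * Real.cos ϑ) ≤ 0}

/-- Reflection across the line through the origin in direction `(cos a, sin a)`. -/
def Psi (a : ℝ) (p : ℝ × ℝ) : ℝ × ℝ :=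
  (p.1 * Real.cos (2 * a) + p.2 * Real.sin (2 * a),
   p.1 * Real.sin (2 * a) - p.2 * Real.cos (2 * a))

/-- The closed cone of opening angle `2a` between the positive `x`-axis and the
ray at angle `π/2 − 2a` from the positive `y`-axis. -/
def coneA (a : ℝ) : Set (ℝ × ℝ) :=
  {p | ∃ r ϑ : ℝ, 0 ≤ r ∧ π / 2 - 2 * a ≤ ϑ ∧ ϑ ≤ π / 2 ∧
    p = (r * Real.sin ϑ, r * Real.cos ϑ)}


lemma Lr_ge (pq : ℝ → ℝ) (h0 : pq 0 = 0) (v : ℝ) : (-1 : ℝ) ≤ Lr pq v := by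
  have hb : BddAbove (Set.range fun q => v * q - Hr pq q) := by
    refine ⟨v ^ 2 / 4, ?_⟩
    rintro _ ⟨q, rfl⟩
    simp only [Hr]
    nlinarith [sq_nonneg (q - v / 2), sq_nonneg (pq q)]
  have := le_ciSup hb 0
  simp only [Hr, h0] at this
  calc (-1 : ℝ) = v * 0 - (0 ^ 2 + 0 ^ 2 + 1) := by ring
    _ ≤ Lr pq v := this

lemma Lf_ge (x y : ℝ) : (-1 : ℝ) ≤ Lf x y := by
  simp only [Lf]; nlinarith [sq_nonneg x, sq_nonneg y]

lemma Jset_ge (pq : ℝ → ℝ) (h0 : pq 0 = 0) (x y : ℝ) :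
    ∀ c ∈ Jset pq x y, (-1 : ℝ) ≤ c := by
  intro c hc
  rcases hc with (hc | hc) | hc
  · rw [Set.mem_singleton_iff] at hc; rw [hc]; exact Lf_ge _ _
  · obtain ⟨τ, z, hτ0, hτ1, _, _, rfl⟩ := hc
    have h1 := Lf_ge ((x - z) / (1 - τ)) (y / (1 - τ))
    have h2 := Lr_ge pq h0 (z / τ)
    nlinarith
  · by_cases h : y = 0
    · rw [if_pos h, Set.mem_singleton_iff] at hc; rw [hc]; exact Lr_ge pq h0 x
    · rw [if_neg h] at hc; exact absurd hc (Set.notMem_empty c)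

lemma Jset_bddBelow (pq : ℝ → ℝ) (h0 : pq 0 = 0) (x y : ℝ) :
    BddBelow (Jset pq x y) := ⟨-1, fun c hc => Jset_ge pq h0 x y c hc⟩

lemma Jset_nonempty (pq : ℝ → ℝ) (x y : ℝ) : (Jset pq x y).Nonempty :=
  ⟨Lf x y, Or.inl (Or.inl rfl)⟩

lemma Jmono (pq : ℝ → ℝ) (h0 : pq 0 = 0) {x x' y y' : ℝ}
    (hx' : 0 ≤ x') (hxx : x' ≤ x) (hy : 0 ≤ y) (hy' : 0 ≤ y')
    (hrad : x ^ 2 + y ^ 2 = x' ^ 2 + y' ^ 2) :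
    sInf (Jset pq x y) ≤ sInf (Jset pq x' y') := by
  have hx : 0 ≤ x := le_trans hx' hxx
  have hbdd := Jset_bddBelow pq h0 x y
  apply le_csInf (Jset_nonempty pq x' y')
  intro c' hc'
  rcases hc' with (hc | hc) | hc
  · rw [Set.mem_singleton_iff] at hc
    refine csInf_le_of_le hbdd (Or.inl (Or.inl rfl)) ?_
    rw [hc]; simp only [Lf]; linarith
  · obtain ⟨τ, z, hτ0, hτ1, hz0, hzx', rfl⟩ := hc
    refine csInf_le_of_le hbdd
      (Or.inl (Or.inr ⟨τ, z, hτ0, hτ1, hz0, le_trans hzx' hxx, rfl⟩)) ?_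
    have hs : (0:ℝ) < 1 - τ := by linarith
    have key : (x - z) ^ 2 + y ^ 2 ≤ (x' - z) ^ 2 + y' ^ 2 := by
      nlinarith [mul_nonneg hz0 (sub_nonneg.2 hxx)]
    simp only [Lf, div_pow]
    rw [← add_div, ← add_div]
    have h2 : ((x - z) ^ 2 + y ^ 2) / (1 - τ) ^ 2 ≤ ((x' - z) ^ 2 + y' ^ 2) / (1 - τ) ^ 2 := by
      gcongr
    nlinarith [mul_nonneg hs.le (sub_nonneg.2 h2)]
  · by_cases h : y' = 0
    · rw [if_pos h, Set.mem_singleton_iff] at hc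
      subst h
      have hx2 : x' ^ 2 ≤ x ^ 2 := by nlinarith
      have hy0 : y = 0 := by nlinarith [sq_nonneg y]
      have hxe : x = x' := le_antisymm (by nlinarith) hxx
      subst hy0; subst hxe
      refine csInf_le hbdd (Or.inr ?_)
      simp [hc]
    · rw [if_neg h] at hc; exact absurd hc (Set.notMem_empty c')

lemma Jmono' (pq : ℝ → ℝ) (h0 : pq 0 = 0) {r ψ ϑ : ℝ} (hr : 0 ≤ r)
    (hϑ1 : 0 ≤ ϑ) (hϑ2 : ϑ ≤ π / 2) (hψ : |ψ| ≤ ϑ) :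
    J pq (r * Real.sin ϑ) (r * Real.cos ϑ) ≤ J pq (r * Real.sin ψ) (r * Real.cos ψ) := by
  have hpi : (0:ℝ) < π := pi_pos
  have hψ2 : |ψ| ≤ π / 2 := le_trans hψ hϑ2
  have hsϑ : 0 ≤ Real.sin ϑ := Real.sin_nonneg_of_nonneg_of_le_pi hϑ1 (by linarith)
  have hsabs : Real.sin |ψ| = |Real.sin ψ| := by
    rcases le_or_gt 0 ψ with h | h
    · rw [abs_of_nonneg h, abs_of_nonneg (Real.sin_nonneg_of_nonneg_of_le_pi h
        (by rw [abs_of_nonneg h] at hψ2; linarith))]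
    · rw [abs_of_neg h, Real.sin_neg, abs_of_nonpos ?_]
      have : 0 ≤ Real.sin (-ψ) := Real.sin_nonneg_of_nonneg_of_le_pi (by linarith)
        (by rw [abs_of_neg h] at hψ2; linarith)
      rw [Real.sin_neg] at this; linarith
  have h1 : |r * Real.sin ϑ| = r * Real.sin ϑ := abs_of_nonneg (mul_nonneg hr hsϑ)
  have h2 : |r * Real.sin ψ| = r * Real.sin |ψ| := by
    rw [abs_mul, abs_of_nonneg hr, hsabs]
  have h3 : Real.cos ψ = Real.cos |ψ| := (Real.cos_abs ψ).symm
  unfold J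
  rw [h1, h2, h3]
  apply Jmono pq h0
  · exact mul_nonneg hr (Real.sin_nonneg_of_nonneg_of_le_pi (abs_nonneg ψ) (by linarith))
  · apply mul_le_mul_of_nonneg_left _ hr
    apply Real.strictMonoOn_sin.monotoneOn _ _ hψ
    · constructor <;> [linarith [abs_nonneg ψ]; linarith]
    · constructor <;> linarith
  · exact mul_nonneg hr (Real.cos_nonneg_of_mem_Icc ⟨by linarith, hϑ2⟩)
  · exact mul_nonneg hr (Real.cos_nonneg_of_mem_Icc ⟨by linarith [abs_nonneg ψ], hψ2⟩)
  · nlinarith [Real.sin_sq_add_cos_sq ϑ, Real.sin_sq_add_cos_sq |ψ|]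

/-- In the cone of opening `2a`, the value function
`J_a = min{J, J ∘ Ψ_a}` equals `J` on the half of the cone adjacent to the
positive `x`-axis and equals `J ∘ Ψ_a` on the other half. -/
theorem Ja_by_reflection
    (D μ ν κ : ℝ) (hD : 1 < D) (hμ : 0 < μ) (hν : 0 < ν) (hκ : 0 < κ)
    (pq : ℝ → ℝ) (hpq : IsCriticalSlope D μ ν κ pq)
    (a : ℝ) (ha0 : 0 < a) (ha : a ≤ π / 2)
    (r ϑ : ℝ) (hr : 0 ≤ r) :
    (π / 2 - a ≤ ϑ → ϑ ≤ π / 2 →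
      min (J pq (r * Real.sin ϑ) (r * Real.cos ϑ))
          (J pq (Psi a (r * Real.sin ϑ, r * Real.cos ϑ)).1
            (Psi a (r * Real.sin ϑ, r * Real.cos ϑ)).2)
        = J pq (r * Real.sin ϑ) (r * Real.cos ϑ)) ∧
    (π / 2 - 2 * a ≤ ϑ → ϑ ≤ π / 2 - a →
      min (J pq (r * Real.sin ϑ) (r * Real.cos ϑ))
          (J pq (Psi a (r * Real.sin ϑ, r * Real.cos ϑ)).1
            (Psi a (r * Real.sin ϑ, r * Real.cos ϑ)).2)
        = J pq (Psi a (r * Real.sin ϑ, r * Real.cos ϑ)).1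
            (Psi a (r * Real.sin ϑ, r * Real.cos ϑ)).2) := by
  have h0 : pq 0 = 0 := (hpq 0).1 (by norm_num)
  have hpi : (0:ℝ) < π := pi_pos
  have hPsi : Psi a (r * Real.sin ϑ, r * Real.cos ϑ)
      = (r * Real.sin (π - 2 * a - ϑ), r * Real.cos (π - 2 * a - ϑ)) := by
    have e1 : Real.sin (π - 2 * a - ϑ) = Real.sin (ϑ + 2 * a) := by
      rw [show π - 2 * a - ϑ = π - (ϑ + 2 * a) by ring, Real.sin_pi_sub]
    have e2 : Real.cos (π - 2 * a - ϑ) = -Real.cos (ϑ + 2 * a) := by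
      rw [show π - 2 * a - ϑ = π - (ϑ + 2 * a) by ring, Real.cos_pi_sub]
    simp only [Psi, Prod.mk.injEq]
    constructor
    · rw [e1, Real.sin_add]; ring
    · rw [e2, Real.cos_add]; ring
  rw [hPsi]
  constructor
  · intro h1 h2
    apply min_eq_left
    apply Jmono' pq h0 hr (by linarith) h2
    rw [abs_le]; constructor <;> linarith
  · intro h1 h2
    apply min_eq_right
    apply Jmono' pq h0 hr (by linarith) (by linarith)
    rw [abs_le]; constructor <;> linarith
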